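/- Under the Bounded-Coefficient Scheme Hypotheses, assume additionally that all the maps T_1, …, T_m and I_1, …, I_m are continuous. Then lim_{n→∞} ‖y_n − x_n‖ = 0. -/

import Mathlib

open Filter


/-- Convergence lemma: nonnegative sequence with summable perturbed recursion converges. -/
lemma aux_conv (r c d : ℕ → ℝ) (hr : ∀ n, 0 ≤ r n) (hc : ∀ n, 0 ≤ c n) (hd : ∀ n, 0 ≤ d n)
    (hcs : Summable c) (hds : Summable d)
    (hrec : ∀ n, r (n + 1) ≤ (1 + c n) * r n + d n) :
    ∃ l, 0 ≤ l ∧ Tendsto r atTop (nhds l) := by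
  set C := ∑' n, c n with hC
  set D := ∑' n, d n with hD
  have hC0 : 0 ≤ C := tsum_nonneg hc
  have hD0 : 0 ≤ D := tsum_nonneg hd
  -- boundedness
  have hbd : ∀ n, r n ≤ (r 0 + ∑ k ∈ Finset.range n, d k) * Real.exp (∑ k ∈ Finset.range n, c k) := by
    intro n
    induction n with
    | zero => simpa using le_mul_of_one_le_right (hr 0) (by simp [Real.one_le_exp_iff])
    | succ n ih =>
      have h1 : r (n+1) ≤ (1 + c n) * r n + d n := hrec n
      have h2 : (1 + c n) ≤ Real.exp (c n) := by
        have := Real.add_one_le_exp (c n); linarith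
      have hnn : 0 ≤ r 0 + ∑ k ∈ Finset.range n, d k :=
        add_nonneg (hr 0) (Finset.sum_nonneg fun k _ => hd k)
      have hexp1 : (1:ℝ) ≤ Real.exp (∑ k ∈ Finset.range (n+1), c k) :=
        Real.one_le_exp (Finset.sum_nonneg fun k _ => hc k)
      calc r (n+1) ≤ (1 + c n) * r n + d n := h1
        _ ≤ Real.exp (c n) * ((r 0 + ∑ k ∈ Finset.range n, d k) * Real.exp (∑ k ∈ Finset.range n, c k)) + d n := by
            have := Real.add_one_le_exp (c n)
            have h3 : (1 + c n) * r n ≤ Real.exp (c n) * r n :=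
              mul_le_mul_of_nonneg_right (by linarith) (hr n)
            have h4 : Real.exp (c n) * r n ≤ Real.exp (c n) * ((r 0 + ∑ k ∈ Finset.range n, d k) * Real.exp (∑ k ∈ Finset.range n, c k)) :=
              mul_le_mul_of_nonneg_left ih (Real.exp_nonneg _)
            linarith
        _ = (r 0 + ∑ k ∈ Finset.range n, d k) * Real.exp (∑ k ∈ Finset.range (n+1), c k) + d n := by
            rw [Finset.sum_range_succ, Real.exp_add]; ring
        _ ≤ (r 0 + ∑ k ∈ Finset.range (n+1), d k) * Real.exp (∑ k ∈ Finset.range (n+1), c k) := by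
            rw [Finset.sum_range_succ (f := d)]
            have : d n ≤ d n * Real.exp (∑ k ∈ Finset.range (n+1), c k) :=
              le_mul_of_one_le_right (hd n) hexp1
            ring_nf
            ring_nf at this ⊢
            nlinarith [this]
  set R := (r 0 + D) * Real.exp C with hR
  have hRub : ∀ n, r n ≤ R := by
    intro n
    refine (hbd n).trans ?_
    have h1 : ∑ k ∈ Finset.range n, d k ≤ D := hds.sum_le_tsum _ (fun k _ => hd k)
    have h2 : ∑ k ∈ Finset.range n, c k ≤ C := hcs.sum_le_tsum _ (fun k _ => hc k)
    have := Real.exp_le_exp.2 h2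
    have hnn : 0 ≤ r 0 + ∑ k ∈ Finset.range n, d k :=
      add_nonneg (hr 0) (Finset.sum_nonneg fun k _ => hd k)
    calc (r 0 + ∑ k ∈ Finset.range n, d k) * Real.exp (∑ k ∈ Finset.range n, c k)
        ≤ (r 0 + D) * Real.exp (∑ k ∈ Finset.range n, c k) := by
          apply mul_le_mul_of_nonneg_right (by linarith) (Real.exp_nonneg _)
      _ ≤ (r 0 + D) * Real.exp C :=
          mul_le_mul_of_nonneg_left this (by linarith [hr 0])
  have hR0 : 0 ≤ R := le_trans (hr 0) (hRub 0)
  set e := fun n => R * c n + d n with he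
  have hes : Summable e := (hcs.mul_left R).add hds
  have he0 : ∀ n, 0 ≤ e n := fun n => add_nonneg (mul_nonneg hR0 (hc n)) (hd n)
  have hrec2 : ∀ n, r (n + 1) ≤ r n + e n := by
    intro n
    have := hrec n
    have h1 : c n * r n ≤ c n * R := mul_le_mul_of_nonneg_left (hRub n) (hc n)
    simp only [he]
    nlinarith [hc n, hr n]
  set g := fun n => r n - ∑ k ∈ Finset.range n, e k with hg
  have hganti : Antitone g := antitone_nat_of_succ_le fun n => by
    simp only [hg, Finset.sum_range_succ]
    have := hrec2 n; linarith
  have hgbdd : BddBelow (Set.range g) := by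
    refine ⟨-(∑' n, e n), ?_⟩
    rintro _ ⟨n, rfl⟩
    simp only [hg]
    have h1 : ∑ k ∈ Finset.range n, e k ≤ ∑' k, e k := hes.sum_le_tsum _ (fun k _ => he0 k)
    have := hr n; linarith
  have hgt : Tendsto g atTop (nhds (⨅ n, g n)) := tendsto_atTop_ciInf hganti hgbdd
  have hsum : Tendsto (fun n => ∑ k ∈ Finset.range n, e k) atTop (nhds (∑' k, e k)) :=
    hes.hasSum.tendsto_sum_nat
  refine ⟨(⨅ n, g n) + ∑' k, e k, ?_, ?_⟩
  · have hrt : Tendsto r atTop (nhds ((⨅ n, g n) + ∑' k, e k)) := by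
      have : r = fun n => g n + ∑ k ∈ Finset.range n, e k := by
        funext n; simp [hg]
      rw [this]; exact hgt.add hsum
    exact le_of_tendsto_of_tendsto tendsto_const_nhds hrt (Eventually.of_forall hr)
  · have : r = fun n => g n + ∑ k ∈ Finset.range n, e k := by
      funext n; simp [hg]
    rw [this]; exact hgt.add hsum


/-- Groetsch-type pointwise estimate from uniform convexity. -/
lemma aux_groetsch {X : Type*} [NormedAddCommGroup X] [NormedSpace ℝ X]
    {δ t a b : ℝ} (hδ : 0 ≤ δ) (hta : a ≤ t) (htb : t ≤ b) (ha : 0 < a) (hb : b < 1)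
    {x z : X} (hx : ‖x‖ ≤ 1) (hz : ‖z‖ ≤ 1) (hsum : ‖x + z‖ ≤ 2 - δ) :
    ‖t • x + (1 - t) • z‖ ≤ 1 - min a (1 - b) * δ := by
  have hc : min a (1 - b) ≤ min t (1 - t) := le_min
    (le_trans (min_le_left _ _) hta) (le_trans (min_le_right _ _) (by linarith))
  rcases le_or_gt t (1/2) with h | h
  · have heq : t • x + (1 - t) • z = t • (x + z) + (1 - 2*t) • z := by
      module
    rw [heq]
    have h1 : ‖t • (x + z) + (1 - 2*t) • z‖ ≤ t * ‖x + z‖ + (1 - 2*t) * ‖z‖ := by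
      refine (norm_add_le _ _).trans ?_
      rw [norm_smul, norm_smul, Real.norm_eq_abs, Real.norm_eq_abs,
        abs_of_nonneg (by linarith), abs_of_nonneg (by linarith)]
    have h2 : t * ‖x + z‖ ≤ t * (2 - δ) := mul_le_mul_of_nonneg_left hsum (by linarith)
    have h3 : (1 - 2*t) * ‖z‖ ≤ (1 - 2*t) * 1 := mul_le_mul_of_nonneg_left hz (by linarith)
    have h4 : min a (1 - b) ≤ t := le_trans (min_le_left _ _) hta
    nlinarith [mul_le_mul_of_nonneg_right h4 hδ]
  · have heq : t • x + (1 - t) • z = (1 - t) • (x + z) + (2*t - 1) • x := by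
      module
    rw [heq]
    have h1 : ‖(1 - t) • (x + z) + (2*t - 1) • x‖ ≤ (1 - t) * ‖x + z‖ + (2*t - 1) * ‖x‖ := by
      refine (norm_add_le _ _).trans ?_
      rw [norm_smul, norm_smul, Real.norm_eq_abs, Real.norm_eq_abs,
        abs_of_nonneg (by linarith), abs_of_nonneg (by linarith)]
    have h2 : (1 - t) * ‖x + z‖ ≤ (1 - t) * (2 - δ) :=
      mul_le_mul_of_nonneg_left hsum (by linarith)
    have h3 : (2*t - 1) * ‖x‖ ≤ (2*t - 1) * 1 := mul_le_mul_of_nonneg_left hx (by linarith)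
    have h4 : min a (1 - b) ≤ 1 - t := le_trans (min_le_right _ _) (by linarith)
    nlinarith [mul_le_mul_of_nonneg_right h4 hδ]

/-- Schu's lemma. -/
lemma aux_schu {X : Type*} [NormedAddCommGroup X] [NormedSpace ℝ X] [UniformConvexSpace X]
    (t : ℕ → ℝ) (a b : ℝ) (ha : 0 < a) (hb : b < 1) (ht : ∀ n, t n ∈ Set.Icc a b)
    (u v : ℕ → X) (l : ℝ) (hl : 0 ≤ l)
    (hu : ∀ η > (0:ℝ), ∀ᶠ n in atTop, ‖u n‖ ≤ l + η)
    (hv : ∀ η > (0:ℝ), ∀ᶠ n in atTop, ‖v n‖ ≤ l + η)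
    (hc : Tendsto (fun n => ‖t n • u n + (1 - t n) • v n‖) atTop (nhds l)) :
    Tendsto (fun n => ‖u n - v n‖) atTop (nhds 0) := by
  rw [Metric.tendsto_atTop]
  intro ε hε
  rcases eq_or_lt_of_le hl with hl0 | hlpos
  · -- l = 0 case
    have h1 := hu (ε/3) (by linarith)
    have h2 := hv (ε/3) (by linarith)
    rw [eventually_atTop] at h1 h2
    obtain ⟨N1, hN1⟩ := h1; obtain ⟨N2, hN2⟩ := h2
    refine ⟨max N1 N2, fun n hn => ?_⟩
    have e1 := hN1 n (le_trans (le_max_left _ _) hn)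
    have e2 := hN2 n (le_trans (le_max_right _ _) hn)
    rw [Real.dist_eq, sub_zero, abs_of_nonneg (norm_nonneg _)]
    calc ‖u n - v n‖ ≤ ‖u n‖ + ‖v n‖ := norm_sub_le _ _
      _ < ε := by rw [← hl0] at e1 e2; linarith
  · -- l > 0 case
    have hε' : (0:ℝ) < ε / (l + 1) := by positivity
    obtain ⟨δ, hδ, hUC⟩ := exists_forall_closed_ball_dist_add_le_two_sub X hε'
    set c := min a (1 - b) with hcdef
    have hc0 : 0 < c := lt_min ha (by linarith)
    set γ := l * c * δ / 2 with hγdef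
    have hγ0 : 0 < γ := by positivity
    set η := min 1 γ with hηdef
    have hη0 : 0 < η := lt_min one_pos hγ0
    have h1 := hu η hη0
    have h2 := hv η hη0
    have h3 : ∀ᶠ n in atTop, l - γ < ‖t n • u n + (1 - t n) • v n‖ := by
      have := hc (Ioi_mem_nhds (show l - γ < l by linarith))
      simpa using this
    rw [eventually_atTop] at h1 h2 h3
    obtain ⟨N1, hN1⟩ := h1; obtain ⟨N2, hN2⟩ := h2; obtain ⟨N3, hN3⟩ := h3
    refine ⟨max N1 (max N2 N3), fun n hn => ?_⟩
    have e1 := hN1 n (le_trans (le_max_left _ _) hn)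
    have e2 := hN2 n (le_trans (le_trans (le_max_left _ _) (le_max_right _ _)) hn)
    have e3 := hN3 n (le_trans (le_trans (le_max_right _ _) (le_max_right _ _)) hn)
    rw [Real.dist_eq, sub_zero, abs_of_nonneg (norm_nonneg _)]
    by_contra hcon
    push_neg at hcon
    set L := l + η with hLdef
    have hL0 : 0 < L := by linarith
    set x' := L⁻¹ • u n with hx'def
    set z' := L⁻¹ • v n with hz'def
    have hx1 : ‖x'‖ ≤ 1 := by
      rw [hx'def, norm_smul, Real.norm_eq_abs, abs_of_pos (inv_pos.2 hL0)]
      rw [inv_mul_le_iff₀ hL0]; linarith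
    have hz1 : ‖z'‖ ≤ 1 := by
      rw [hz'def, norm_smul, Real.norm_eq_abs, abs_of_pos (inv_pos.2 hL0)]
      rw [inv_mul_le_iff₀ hL0]; linarith
    have hdist : ε / (l + 1) ≤ ‖x' - z'‖ := by
      rw [hx'def, hz'def, ← smul_sub, norm_smul, Real.norm_eq_abs,
        abs_of_pos (inv_pos.2 hL0), inv_mul_eq_div]
      have hLle : L ≤ l + 1 := by
        have : η ≤ 1 := min_le_left _ _
        simp only [hLdef]; linarith
      rw [div_le_div_iff₀ (by linarith) hL0]
      nlinarith [norm_nonneg (u n - v n)]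
    have hsum : ‖x' + z'‖ ≤ 2 - δ := hUC hx1 hz1 hdist
    have hkey : ‖t n • x' + (1 - t n) • z'‖ ≤ 1 - c * δ :=
      aux_groetsch hδ.le (ht n).1 (ht n).2 ha hb hx1 hz1 hsum
    have hscale : ‖t n • u n + (1 - t n) • v n‖ = L * ‖t n • x' + (1 - t n) • z'‖ := by
      rw [hx'def, hz'def, smul_comm, smul_comm (1 - t n), ← smul_add, norm_smul,
        Real.norm_eq_abs, abs_of_pos (inv_pos.2 hL0)]
      field_simp
    have hfinal : ‖t n • u n + (1 - t n) • v n‖ ≤ l - γ := by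
      rw [hscale]
      calc L * ‖t n • x' + (1 - t n) • z'‖ ≤ L * (1 - c * δ) :=
            mul_le_mul_of_nonneg_left hkey hL0.le
        _ ≤ l - γ := by
            have hηγ : η ≤ γ := min_le_right _ _
            have : 0 ≤ η * (c * δ) := by positivity
            simp only [hLdef, hγdef] at *
            nlinarith
    linarith


/-- Gauge linearization. -/
lemma aux_gauge {f : ℝ → ℝ} {N Ns : ℝ} (hN : 0 < N) (hNs : 0 < Ns)
    (hmono : StrictMonoOn f (Set.Ici 0)) (hf0 : f 0 = 0)
    (hbd : ∀ ζ, N ≤ ζ → f ζ ≤ Ns * ζ) :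
    ∀ d, 0 ≤ d → f d ≤ Ns * d + f N := by
  intro d hd
  have hfN : 0 ≤ f N := by
    have := hmono (Set.mem_Ici.2 le_rfl) (Set.mem_Ici.2 hN.le) hN
    linarith [hf0 ▸ this]
  rcases le_or_gt N d with h | h
  · have := hbd d h
    linarith
  · have hfd : f d ≤ f N := by
      rcases eq_or_lt_of_le (le_of_lt h) with he | hlt
      · rw [he]
      · exact (hmono (Set.mem_Ici.2 hd) (Set.mem_Ici.2 hN.le) hlt).le
    nlinarith

/-- Summability of products of nonneg summable sequences. -/
lemma aux_summable_mul {f g : ℕ → ℝ} (hf : Summable f) (hg : Summable g)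
    (hf0 : ∀ n, 0 ≤ f n) (hg0 : ∀ n, 0 ≤ g n) : Summable (fun n => f n * g n) := by
  refine Summable.of_nonneg_of_le (fun n => mul_nonneg (hf0 n) (hg0 n))
    (fun n => ?_) (hf.mul_right (∑' k, g k))
  exact mul_le_mul_of_nonneg_left (hg.le_tsum n fun j _ => hg0 j) (hf0 n)

lemma aux_summable_onepm {f g : ℕ → ℝ} (hf : Summable f) (hg : Summable g)
    (hf0 : ∀ n, 0 ≤ f n) (hg0 : ∀ n, 0 ≤ g n) :
    Summable (fun n => (1 + f n) * (1 + g n) - 1) := by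
  have : (fun n => (1 + f n) * (1 + g n) - 1) = fun n => f n + (g n + f n * g n) := by
    funext n; ring
  rw [this]
  exact hf.add (hg.add (aux_summable_mul hf hg hf0 hg0))

/-- Norm bound for convex combinations. -/
lemma aux_comb_norm {X : Type*} [NormedAddCommGroup X] [NormedSpace ℝ X] {m : ℕ}
    (w : Fin m → ℝ) (hw : ∀ i, 0 ≤ w i) (z : Fin m → X) :
    ‖∑ i, w i • z i‖ ≤ ∑ i, w i * ‖z i‖ := by
  refine (norm_sum_le _ _).trans (Finset.sum_le_sum fun i _ => ?_)
  rw [norm_smul, Real.norm_eq_abs, abs_of_nonneg (hw i)]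
set_option maxHeartbeats 1600000 in
theorem stmt12
    {X : Type*} [NormedAddCommGroup X] [NormedSpace ℝ X] [CompleteSpace X]
    [UniformConvexSpace X]
    {K : Set X} (hKne : K.Nonempty) (hKcl : IsClosed K) (hKco : Convex ℝ K)
    {m : ℕ} (hm : 1 ≤ m)
    (T I : Fin m → X → X)
    (hTK : ∀ i, Set.MapsTo (T i) K K) (hIK : ∀ i, Set.MapsTo (I i) K K)
    (hTcont : ∀ i, ContinuousOn (T i) K) (hIcont : ∀ i, ContinuousOn (I i) K)
    (μ lam tμ tlam : Fin m → ℕ → ℝ)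
    (hμ0 : ∀ i n, 0 ≤ μ i n) (hlam0 : ∀ i n, 0 ≤ lam i n)
    (htμ0 : ∀ i n, 0 ≤ tμ i n) (htlam0 : ∀ i n, 0 ≤ tlam i n)
    (hμlim : ∀ i, Tendsto (μ i) atTop (nhds 0)) (hlamlim : ∀ i, Tendsto (lam i) atTop (nhds 0))
    (htμlim : ∀ i, Tendsto (tμ i) atTop (nhds 0))
    (htlamlim : ∀ i, Tendsto (tlam i) atTop (nhds 0))
    (hμsum : ∀ i, Summable (μ i)) (hlamsum : ∀ i, Summable (lam i))
    (htμsum : ∀ i, Summable (tμ i)) (htlamsum : ∀ i, Summable (tlam i))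
    (φ ψ : Fin m → ℝ → ℝ)
    (hφmono : ∀ i, StrictMonoOn (φ i) (Set.Ici 0))
    (hφcont : ∀ i, ContinuousOn (φ i) (Set.Ici 0))
    (hφ0 : ∀ i, φ i 0 = 0) (hφpos : ∀ i t, 0 ≤ t → 0 ≤ φ i t)
    (hψmono : ∀ i, StrictMonoOn (ψ i) (Set.Ici 0))
    (hψcont : ∀ i, ContinuousOn (ψ i) (Set.Ici 0))
    (hψ0 : ∀ i, ψ i 0 = 0) (hψpos : ∀ i t, 0 ≤ t → 0 ≤ ψ i t)
    (hI : ∀ i, ∀ n, 1 ≤ n → ∀ x ∈ K, ∀ y ∈ K,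
      ‖(I i)^[n] x - (I i)^[n] y‖ ≤ ‖x - y‖ + tμ i n * ψ i ‖x - y‖ + tlam i n)
    (hT : ∀ i, ∀ n, 1 ≤ n → ∀ x ∈ K, ∀ y ∈ K,
      ‖(T i)^[n] x - (T i)^[n] y‖ ≤
        ‖(I i)^[n] x - (I i)^[n] y‖ + μ i n * φ i ‖(I i)^[n] x - (I i)^[n] y‖ + lam i n)
    (F : Set X)
    (hFdef : ∀ p, p ∈ F ↔ p ∈ K ∧ ∀ i, T i p = p ∧ I i p = p)
    (hFne : F.Nonempty)
    (M Ms N Ns : Fin m → ℝ)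
    (hM : ∀ i, 0 < M i) (hMs : ∀ i, 0 < Ms i) (hN : ∀ i, 0 < N i) (hNs : ∀ i, 0 < Ns i)
    (hφbound : ∀ i ξ, M i ≤ ξ → φ i ξ ≤ Ms i * ξ)
    (hψbound : ∀ i ζ, N i ≤ ζ → ψ i ζ ≤ Ns i * ζ)
    (alo ahi blo bhi : ℝ)
    (halo : 0 < alo) (hahi : alo < ahi) (hahi1 : ahi < 1)
    (hblo : 0 < blo) (hbhi : blo < bhi) (hbhi1 : bhi < 1)
    (a b : Fin (m + 1) → ℕ → ℝ)
    (ha : ∀ j n, a j n ∈ Set.Icc alo ahi) (hb : ∀ j n, b j n ∈ Set.Icc blo bhi)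
    (hasum : ∀ n, ∑ j, a j n = 1) (hbsum : ∀ n, ∑ j, b j n = 1)
    (x y : ℕ → X) (hx0 : x 0 ∈ K)
    (hy : ∀ n, y n = b 0 n • x n + ∑ i : Fin m, b i.succ n • (I i)^[n] (x n))
    (hxrec : ∀ n, x (n + 1) = a 0 n • x n + ∑ i : Fin m, a i.succ n • (T i)^[n] (y n))
    : Tendsto (fun n => ‖y n - x n‖) atTop (nhds 0) := by  classical
  -- the fixed point
  obtain ⟨p, hpF⟩ := hFne
  rw [hFdef] at hpF
  obtain ⟨hpK, hpfix⟩ := hpF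
  have hIp : ∀ i n, (I i)^[n] p = p := fun i n => Function.iterate_fixed (hpfix i).2 n
  have hTp : ∀ i n, (T i)^[n] p = p := fun i n => Function.iterate_fixed (hpfix i).1 n
  -- memberships
  have hyK : ∀ n, x n ∈ K → y n ∈ K := by
    intro n hxn
    rw [hy n]
    have : b 0 n • x n + ∑ i : Fin m, b i.succ n • (I i)^[n] (x n)
        = ∑ j : Fin (m+1), b j n • (Fin.cases (x n) (fun i => (I i)^[n] (x n)) j : X) := by
      rw [Fin.sum_univ_succ]; simp
    rw [this]
    refine hKco.sum_mem (fun j _ => (hb j n).1.trans' hblo.le) (hbsum n) (fun j _ => ?_)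
    induction j using Fin.cases with
    | zero => simpa using hxn
    | succ i => simpa using ((hIK i).iterate n) hxn
  have hxK : ∀ n, x n ∈ K := by
    intro n
    induction n with
    | zero => exact hx0
    | succ n ih =>
      rw [hxrec n]
      have : a 0 n • x n + ∑ i : Fin m, a i.succ n • (T i)^[n] (y n)
          = ∑ j : Fin (m+1), a j n • (Fin.cases (x n) (fun i => (T i)^[n] (y n)) j : X) := by
        rw [Fin.sum_univ_succ]; simp
      rw [this]
      refine hKco.sum_mem (fun j _ => (ha j n).1.trans' halo.le) (hasum n) (fun j _ => ?_)
      induction j using Fin.cases with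
      | zero => simpa using ih
      | succ i => simpa using ((hTK i).iterate n) (hyK n ih)
  have hyK' : ∀ n, y n ∈ K := fun n => hyK n (hxK n)
  -- basic sequences
  set r : ℕ → ℝ := fun n => ‖x n - p‖ with hrdef
  set sb : ℕ → ℝ := fun n => ‖y n - p‖ with hsbdef
  set tA : ℕ → ℝ := fun n => ∑ i : Fin m, tμ i n * Ns i with htAdef
  set tB : ℕ → ℝ := fun n => ∑ i : Fin m, (tμ i n * ψ i (N i) + tlam i n) with htBdef
  set A : ℕ → ℝ := fun n => ∑ i : Fin m, μ i n * Ms i with hAdef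
  set B : ℕ → ℝ := fun n => ∑ i : Fin m, (μ i n * φ i (M i) + lam i n) with hBdef
  set G : ℕ → ℝ := fun n => (1 + A n) * (1 + tA n) with hGdef
  set H : ℕ → ℝ := fun n => (1 + A n) * tB n + B n with hHdef
  have hr0 : ∀ n, 0 ≤ r n := fun n => norm_nonneg _
  have hsb0 : ∀ n, 0 ≤ sb n := fun n => norm_nonneg _
  have htA0 : ∀ n, 0 ≤ tA n := fun n => Finset.sum_nonneg fun i _ =>
    mul_nonneg (htμ0 i n) (hNs i).le
  have htB0 : ∀ n, 0 ≤ tB n := fun n => Finset.sum_nonneg fun i _ =>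
    add_nonneg (mul_nonneg (htμ0 i n) (hψpos i _ (hN i).le)) (htlam0 i n)
  have hA0 : ∀ n, 0 ≤ A n := fun n => Finset.sum_nonneg fun i _ =>
    mul_nonneg (hμ0 i n) (hMs i).le
  have hB0 : ∀ n, 0 ≤ B n := fun n => Finset.sum_nonneg fun i _ =>
    add_nonneg (mul_nonneg (hμ0 i n) (hφpos i _ (hM i).le)) (hlam0 i n)
  have hG1 : ∀ n, 1 ≤ G n := by
    intro n
    have := htA0 n; have := hA0 n
    simp only [hGdef]; nlinarith
  have hH0 : ∀ n, 0 ≤ H n := fun n =>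
    add_nonneg (mul_nonneg (by linarith [hA0 n]) (htB0 n)) (hB0 n)
  -- key estimate for I
  have hIE : ∀ (i : Fin m) n, 1 ≤ n → ∀ z ∈ K,
      ‖(I i)^[n] z - p‖ ≤ (1 + tA n) * ‖z - p‖ + tB n := by
    intro i n hn z hz
    have h1 := hI i n hn z hz p hpK
    rw [hIp i n] at h1
    have hgauge := aux_gauge (hN i) (hNs i) (hψmono i) (hψ0 i) (hψbound i) ‖z - p‖ (norm_nonneg _)
    have h2 : tμ i n * ψ i ‖z - p‖ ≤ tμ i n * (Ns i * ‖z - p‖ + ψ i (N i)) :=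
      mul_le_mul_of_nonneg_left hgauge (htμ0 i n)
    have h3 : tμ i n * Ns i ≤ tA n := by
      simpa using Finset.single_le_sum (f := fun j => tμ j n * Ns j)
        (fun j _ => mul_nonneg (htμ0 j n) (hNs j).le) (Finset.mem_univ i)
    have h4 : tμ i n * ψ i (N i) + tlam i n ≤ tB n := by
      simpa using Finset.single_le_sum (f := fun j => tμ j n * ψ j (N j) + tlam j n)
        (fun j _ => add_nonneg (mul_nonneg (htμ0 j n) (hψpos j _ (hN j).le)) (htlam0 j n))
        (Finset.mem_univ i)
    have h5 : tμ i n * Ns i * ‖z - p‖ ≤ tA n * ‖z - p‖ :=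
      mul_le_mul_of_nonneg_right h3 (norm_nonneg _)
    have h6 : tμ i n * (Ns i * ‖z - p‖ + ψ i (N i))
        = tμ i n * Ns i * ‖z - p‖ + tμ i n * ψ i (N i) := by ring
    have h7 : (1 + tA n) * ‖z - p‖ = ‖z - p‖ + tA n * ‖z - p‖ := by ring
    linarith
  -- key estimate for T
  have hTE : ∀ (i : Fin m) n, 1 ≤ n → ∀ z ∈ K,
      ‖(T i)^[n] z - p‖ ≤ G n * ‖z - p‖ + H n := by
    intro i n hn z hz
    have h1 := hT i n hn z hz p hpK
    rw [hTp i n, hIp i n] at h1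
    have hw0 : (0:ℝ) ≤ ‖(I i)^[n] z - p‖ := norm_nonneg _
    have hIEz := hIE i n hn z hz
    have hgauge := aux_gauge (hM i) (hMs i) (hφmono i) (hφ0 i) (hφbound i)
      ‖(I i)^[n] z - p‖ hw0
    have h2 : μ i n * φ i ‖(I i)^[n] z - p‖
        ≤ μ i n * (Ms i * ‖(I i)^[n] z - p‖ + φ i (M i)) :=
      mul_le_mul_of_nonneg_left hgauge (hμ0 i n)
    have h3 : μ i n * Ms i ≤ A n := by
      simpa using Finset.single_le_sum (f := fun j => μ j n * Ms j)
        (fun j _ => mul_nonneg (hμ0 j n) (hMs j).le) (Finset.mem_univ i)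
    have h4 : μ i n * φ i (M i) + lam i n ≤ B n := by
      simpa using Finset.single_le_sum (f := fun j => μ j n * φ j (M j) + lam j n)
        (fun j _ => add_nonneg (mul_nonneg (hμ0 j n) (hφpos j _ (hM j).le)) (hlam0 j n))
        (Finset.mem_univ i)
    have h5 : μ i n * Ms i * ‖(I i)^[n] z - p‖ ≤ A n * ‖(I i)^[n] z - p‖ :=
      mul_le_mul_of_nonneg_right h3 hw0
    have h6 : μ i n * (Ms i * ‖(I i)^[n] z - p‖ + φ i (M i))
        = μ i n * Ms i * ‖(I i)^[n] z - p‖ + μ i n * φ i (M i) := by ring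
    have h7 : ‖(T i)^[n] z - p‖ ≤ (1 + A n) * ‖(I i)^[n] z - p‖ + B n := by
      have h8 : (1 + A n) * ‖(I i)^[n] z - p‖ = ‖(I i)^[n] z - p‖ + A n * ‖(I i)^[n] z - p‖ := by
        ring
      linarith
    have h9 : (1 + A n) * ‖(I i)^[n] z - p‖ ≤ (1 + A n) * ((1 + tA n) * ‖z - p‖ + tB n) :=
      mul_le_mul_of_nonneg_left hIEz (by linarith [hA0 n])
    have h10 : (1 + A n) * ((1 + tA n) * ‖z - p‖ + tB n)
        = (1 + A n) * (1 + tA n) * ‖z - p‖ + (1 + A n) * tB n := by ring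
    have hGH : G n * ‖z - p‖ + H n
        = (1 + A n) * (1 + tA n) * ‖z - p‖ + ((1 + A n) * tB n + B n) := by
      simp only [hGdef, hHdef]
    linarith
  -- identity for y n - p
  have hbsum' : ∀ n, b 0 n + ∑ i : Fin m, b i.succ n = 1 := by
    intro n; rw [← Fin.sum_univ_succ (f := fun j => b j n)]; exact hbsum n
  have hasum' : ∀ n, a 0 n + ∑ i : Fin m, a i.succ n = 1 := by
    intro n; rw [← Fin.sum_univ_succ (f := fun j => a j n)]; exact hasum n
  have hyp : ∀ n, y n - p
      = b 0 n • (x n - p) + ∑ i : Fin m, b i.succ n • ((I i)^[n] (x n) - p) := by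
    intro n
    have key : (b 0 n + ∑ i : Fin m, b i.succ n) • p = p := by rw [hbsum' n, one_smul]
    calc y n - p = b 0 n • x n + (∑ i : Fin m, b i.succ n • (I i)^[n] (x n))
          - (b 0 n + ∑ i : Fin m, b i.succ n) • p := by rw [hy n, key]
      _ = b 0 n • (x n - p) + ∑ i : Fin m, b i.succ n • ((I i)^[n] (x n) - p) := by
          rw [add_smul, Finset.sum_smul]
          simp only [smul_sub]
          rw [Finset.sum_sub_distrib]
          abel
  have hxp : ∀ n, x (n+1) - p
      = a 0 n • (x n - p) + ∑ i : Fin m, a i.succ n • ((T i)^[n] (y n) - p) := by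
    intro n
    have key : (a 0 n + ∑ i : Fin m, a i.succ n) • p = p := by rw [hasum' n, one_smul]
    calc x (n+1) - p = a 0 n • x n + (∑ i : Fin m, a i.succ n • (T i)^[n] (y n))
          - (a 0 n + ∑ i : Fin m, a i.succ n) • p := by rw [hxrec n, key]
      _ = a 0 n • (x n - p) + ∑ i : Fin m, a i.succ n • ((T i)^[n] (y n) - p) := by
          rw [add_smul, Finset.sum_smul]
          simp only [smul_sub]
          rw [Finset.sum_sub_distrib]
          abel
  -- y-level estimate
  have hYE : ∀ n, 1 ≤ n → sb n ≤ (1 + tA n) * r n + tB n := by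
    intro n hn
    show ‖y n - p‖ ≤ (1 + tA n) * ‖x n - p‖ + tB n
    rw [hyp n]
    have e1 : ‖b 0 n • (x n - p)‖ = b 0 n * ‖x n - p‖ := by
      rw [norm_smul, Real.norm_eq_abs, abs_of_nonneg (hblo.le.trans (hb 0 n).1)]
    have e2 := aux_comb_norm (fun i => b i.succ n)
      (fun i => hblo.le.trans (hb i.succ n).1) (fun i => (I i)^[n] (x n) - p)
    have h1 : ‖b 0 n • (x n - p) + ∑ i : Fin m, b i.succ n • ((I i)^[n] (x n) - p)‖
        ≤ b 0 n * ‖x n - p‖ + ∑ i : Fin m, b i.succ n * ‖(I i)^[n] (x n) - p‖ :=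
      (norm_add_le _ _).trans (add_le_add (le_of_eq e1) e2)
    have h2 : ∑ i : Fin m, b i.succ n * ‖(I i)^[n] (x n) - p‖
        ≤ ∑ i : Fin m, b i.succ n * ((1 + tA n) * ‖x n - p‖ + tB n) :=
      Finset.sum_le_sum fun i _ => mul_le_mul_of_nonneg_left
        (hIE i n hn (x n) (hxK n)) (hblo.le.trans (hb i.succ n).1)
    have h3 : ∑ i : Fin m, b i.succ n * ((1 + tA n) * ‖x n - p‖ + tB n)
        = (1 - b 0 n) * ((1 + tA n) * ‖x n - p‖ + tB n) := by
      rw [← Finset.sum_mul]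
      have hsum : ∑ i : Fin m, b i.succ n = 1 - b 0 n := by linarith [hbsum' n]
      rw [hsum]
    have hb0a : 0 ≤ b 0 n := hblo.le.trans (hb 0 n).1
    have hb0b : b 0 n ≤ 1 := le_of_lt (lt_of_le_of_lt (hb 0 n).2 hbhi1)
    have hZr : ‖x n - p‖ ≤ (1 + tA n) * ‖x n - p‖ + tB n := by
      nlinarith [htA0 n, htB0 n, norm_nonneg (x n - p)]
    nlinarith [h1, h2, h3, hZr]
  -- x-level estimate
  have hXE : ∀ n, 1 ≤ n →
      r (n+1) ≤ a 0 n * r n + (1 - a 0 n) * (G n * sb n + H n) := by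
    intro n hn
    show ‖x (n+1) - p‖ ≤ a 0 n * ‖x n - p‖ + (1 - a 0 n) * (G n * ‖y n - p‖ + H n)
    rw [hxp n]
    have e1 : ‖a 0 n • (x n - p)‖ = a 0 n * ‖x n - p‖ := by
      rw [norm_smul, Real.norm_eq_abs, abs_of_nonneg (halo.le.trans (ha 0 n).1)]
    have e2 := aux_comb_norm (fun i => a i.succ n)
      (fun i => halo.le.trans (ha i.succ n).1) (fun i => (T i)^[n] (y n) - p)
    have h1 : ‖a 0 n • (x n - p) + ∑ i : Fin m, a i.succ n • ((T i)^[n] (y n) - p)‖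
        ≤ a 0 n * ‖x n - p‖ + ∑ i : Fin m, a i.succ n * ‖(T i)^[n] (y n) - p‖ :=
      (norm_add_le _ _).trans (add_le_add (le_of_eq e1) e2)
    have h2 : ∑ i : Fin m, a i.succ n * ‖(T i)^[n] (y n) - p‖
        ≤ ∑ i : Fin m, a i.succ n * (G n * ‖y n - p‖ + H n) :=
      Finset.sum_le_sum fun i _ => mul_le_mul_of_nonneg_left
        (hTE i n hn (y n) (hyK' n)) (halo.le.trans (ha i.succ n).1)
    have h3 : ∑ i : Fin m, a i.succ n * (G n * ‖y n - p‖ + H n)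
        = (1 - a 0 n) * (G n * ‖y n - p‖ + H n) := by
      rw [← Finset.sum_mul]
      have hsum : ∑ i : Fin m, a i.succ n = 1 - a 0 n := by linarith [hasum' n]
      rw [hsum]
    linarith
  -- recursion for r
  set c : ℕ → ℝ := fun n => G n * (1 + tA n) - 1 with hcdef
  set d : ℕ → ℝ := fun n => G n * tB n + H n with hddef
  have hc0 : ∀ n, 0 ≤ c n := by
    intro n
    have h1 := hG1 n; have h2 := htA0 n
    simp only [hcdef]; nlinarith
  have hd0 : ∀ n, 0 ≤ d n := fun n =>
    add_nonneg (mul_nonneg (by linarith [hG1 n]) (htB0 n)) (hH0 n)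
  have hrrec : ∀ n, 1 ≤ n → r (n+1) ≤ (1 + c n) * r n + d n := by
    intro n hn
    have h1 := hXE n hn
    have h2 := hYE n hn
    have hGn := hG1 n
    have htAn := htA0 n
    have htBn := htB0 n
    have hHn := hH0 n
    have hrn := hr0 n
    have ha0a : alo ≤ a 0 n := (ha 0 n).1
    have ha0b : a 0 n ≤ ahi := (ha 0 n).2
    have h3 : G n * sb n ≤ G n * ((1 + tA n) * r n + tB n) :=
      mul_le_mul_of_nonneg_left h2 (by linarith)
    have hone : (1:ℝ) ≤ G n * (1 + tA n) := by nlinarith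
    have hGtB : 0 ≤ G n * tB n := mul_nonneg (by linarith) htBn
    have hrX1 : r n ≤ G n * ((1 + tA n) * r n + tB n) + H n := by nlinarith
    have h5 : (1 - a 0 n) * (G n * sb n + H n)
        ≤ (1 - a 0 n) * (G n * ((1 + tA n) * r n + tB n) + H n) :=
      mul_le_mul_of_nonneg_left (by linarith) (by linarith)
    have h6 : a 0 n * r n ≤ a 0 n * (G n * ((1 + tA n) * r n + tB n) + H n) :=
      mul_le_mul_of_nonneg_left hrX1 (by linarith)
    have h7 : (1 + c n) * r n + d n = G n * ((1 + tA n) * r n + tB n) + H n := by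
      simp only [hcdef, hddef]
      ring
    linarith
  -- summability
  have htAsum : Summable tA := by
    rw [htAdef]
    exact summable_sum fun i _ => (htμsum i).mul_right (Ns i)
  have htBsum : Summable tB := by
    rw [htBdef]
    exact summable_sum fun i _ => ((htμsum i).mul_right (ψ i (N i))).add (htlamsum i)
  have hAsum : Summable A := by
    rw [hAdef]
    exact summable_sum fun i _ => (hμsum i).mul_right (Ms i)
  have hBsum : Summable B := by
    rw [hBdef]
    exact summable_sum fun i _ => ((hμsum i).mul_right (φ i (M i))).add (hlamsum i)
  have he1sum : Summable (fun n => (1 + A n) * (1 + tA n) - 1) :=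
    aux_summable_onepm hAsum htAsum hA0 htA0
  have he10 : ∀ n, 0 ≤ (1 + A n) * (1 + tA n) - 1 := fun n => by nlinarith [hA0 n, htA0 n]
  have hcsum : Summable c := by
    have hceq : c = fun n => (1 + ((1 + A n) * (1 + tA n) - 1)) * (1 + tA n) - 1 := by
      funext n; simp only [hcdef, hGdef]; ring
    rw [hceq]
    exact aux_summable_onepm he1sum htAsum he10 htA0
  have hdsum : Summable d := by
    have hCA0 : 0 ≤ ∑' n, A n := tsum_nonneg hA0
    have hCtA0 : 0 ≤ ∑' n, tA n := tsum_nonneg htA0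
    have hbound : ∀ n, d n
        ≤ ((1 + ∑' n, A n) * (1 + ∑' n, tA n) + (1 + ∑' n, A n)) * tB n + B n := by
      intro n
      have h1 : A n ≤ ∑' n, A n := hAsum.le_tsum n fun j _ => hA0 j
      have h2 : tA n ≤ ∑' n, tA n := htAsum.le_tsum n fun j _ => htA0 j
      have h3 : (1 + A n) * (1 + tA n) ≤ (1 + ∑' n, A n) * (1 + ∑' n, tA n) := by
        nlinarith [hA0 n, htA0 n]
      have h4 : (1 + A n) * (1 + tA n) * tB n
          ≤ (1 + ∑' n, A n) * (1 + ∑' n, tA n) * tB n :=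
        mul_le_mul_of_nonneg_right h3 (htB0 n)
      have h5 : (1 + A n) * tB n ≤ (1 + ∑' n, A n) * tB n :=
        mul_le_mul_of_nonneg_right (by linarith) (htB0 n)
      simp only [hddef, hGdef, hHdef]
      nlinarith [h4, h5]
    exact Summable.of_nonneg_of_le hd0 hbound ((htBsum.mul_left _).add hBsum)
  -- limits of the perturbation sequences
  have htAlim : Tendsto tA atTop (nhds 0) := by
    rw [htAdef]
    have := tendsto_finset_sum (Finset.univ : Finset (Fin m))
      (fun i _ => (htμlim i).mul_const (Ns i))
    simpa using this
  have htBlim : Tendsto tB atTop (nhds 0) := by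
    rw [htBdef]
    have := tendsto_finset_sum (Finset.univ : Finset (Fin m))
      (fun i _ => ((htμlim i).mul_const (ψ i (N i))).add (htlamlim i))
    simpa using this
  have hAlim : Tendsto A atTop (nhds 0) := by
    rw [hAdef]
    have := tendsto_finset_sum (Finset.univ : Finset (Fin m))
      (fun i _ => (hμlim i).mul_const (Ms i))
    simpa using this
  have hBlim : Tendsto B atTop (nhds 0) := by
    rw [hBdef]
    have := tendsto_finset_sum (Finset.univ : Finset (Fin m))
      (fun i _ => ((hμlim i).mul_const (φ i (M i))).add (hlamlim i))
    simpa using this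
  have hGlim : Tendsto G atTop (nhds 1) := by
    rw [hGdef]
    have := (tendsto_const_nhds (x := (1:ℝ)) (f := atTop)).add hAlim |>.mul
      ((tendsto_const_nhds (x := (1:ℝ)) (f := atTop)).add htAlim)
    simpa using this
  have hHlim : Tendsto H atTop (nhds 0) := by
    rw [hHdef]
    have := (((tendsto_const_nhds (x := (1:ℝ)) (f := atTop)).add hAlim).mul htBlim).add hBlim
    simpa using this
  -- convergence of r
  obtain ⟨l, hl0, hrl⟩ : ∃ l, 0 ≤ l ∧ Tendsto r atTop (nhds l) := by
    obtain ⟨l, hl0, hrl'⟩ := aux_conv (fun n => r (n+1)) (fun n => c (n+1)) (fun n => d (n+1))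
      (fun n => hr0 _) (fun n => hc0 _) (fun n => hd0 _)
      ((summable_nat_add_iff 1).2 hcsum) ((summable_nat_add_iff 1).2 hdsum)
      (fun n => hrrec (n+1) (Nat.le_add_left 1 n))
    exact ⟨l, hl0, (tendsto_add_atTop_iff_nat 1).1 hrl'⟩
  -- convergence of sb to the same limit
  have hZlim : Tendsto (fun n => (1 + tA n) * r n + tB n) atTop (nhds l) := by
    have h1 : Tendsto (fun n => (1:ℝ) + tA n) atTop (nhds 1) := by
      simpa using tendsto_const_nhds.add htAlim
    simpa using (h1.mul hrl).add htBlim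
  have hsl : Tendsto sb atTop (nhds l) := by
    rw [Metric.tendsto_atTop]
    intro ε hε
    have h1ahi : (0:ℝ) < 1 - ahi := by linarith
    set θ := min 1 (ε * (1 - ahi) / (2 * (l + 5))) with hθdef
    have hθpos : 0 < θ := lt_min one_pos (by positivity)
    have hθ1 : θ ≤ 1 := min_le_left _ _
    have hθ2 : θ * (2 * (l + 5)) ≤ ε * (1 - ahi) := by
      have h := min_le_right 1 (ε * (1 - ahi) / (2 * (l + 5)))
      calc θ * (2 * (l + 5)) ≤ (ε * (1 - ahi) / (2 * (l + 5))) * (2 * (l + 5)) :=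
            mul_le_mul_of_nonneg_right h (by positivity)
        _ = ε * (1 - ahi) := div_mul_cancel₀ _ (by positivity)
    obtain ⟨N1, hN1⟩ := Metric.tendsto_atTop.1 hrl θ hθpos
    obtain ⟨N2, hN2⟩ := Metric.tendsto_atTop.1 htAlim θ hθpos
    obtain ⟨N3, hN3⟩ := Metric.tendsto_atTop.1 htBlim θ hθpos
    obtain ⟨N4, hN4⟩ := Metric.tendsto_atTop.1 hGlim θ hθpos
    obtain ⟨N5, hN5⟩ := Metric.tendsto_atTop.1 hHlim θ hθpos
    refine ⟨max (max (max N1 N2) (max N3 N4)) (max N5 1), fun n hn => ?_⟩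
    simp only [max_le_iff] at hn
    obtain ⟨⟨⟨hn1, hn2⟩, hn3, hn4⟩, hn5, hn6⟩ := hn
    have e1 : |r n - l| < θ := by have := hN1 n hn1; rwa [Real.dist_eq] at this
    have e1' : |r (n+1) - l| < θ := by
      have := hN1 (n+1) (by omega); rwa [Real.dist_eq] at this
    have e2 : tA n ≤ θ := by
      have := hN2 n hn2; rw [Real.dist_eq, sub_zero] at this; exact (abs_lt.1 this).2.le
    have e3 : tB n ≤ θ := by
      have := hN3 n hn3; rw [Real.dist_eq, sub_zero] at this; exact (abs_lt.1 this).2.le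
    have e4 : G n ≤ 1 + θ := by
      have := hN4 n hn4; rw [Real.dist_eq] at this; linarith [(abs_lt.1 this).2]
    have e5 : H n ≤ θ := by
      have := hN5 n hn5; rw [Real.dist_eq] at this; linarith [(abs_lt.1 this).2]
    have er1 : l - θ < r n := by linarith [(abs_lt.1 e1).1]
    have er2 : r n < l + θ := by linarith [(abs_lt.1 e1).2]
    have er3 : l - θ < r (n+1) := by linarith [(abs_lt.1 e1').1]
    have eY := hYE n hn6
    have eX := hXE n hn6
    have ha0a : alo ≤ a 0 n := (ha 0 n).1
    have ha0b : a 0 n ≤ ahi := (ha 0 n).2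
    have ha00 : (0:ℝ) ≤ a 0 n := halo.le.trans ha0a
    have hql : (0:ℝ) < 1 - a 0 n := by linarith
    have key4 : θ * (l + 3) < (1 - ahi) * ε := by nlinarith [hθpos, hl0]
    rw [Real.dist_eq, abs_lt]
    constructor
    · -- lower bound: -ε < sb n - l
      by_contra hcon
      push_neg at hcon
      have hcon' : sb n ≤ l - ε := by linarith
      have hεl : ε ≤ l := by linarith [hsb0 n]
      have p1 : a 0 n * r n ≤ a 0 n * (l + θ) :=
        mul_le_mul_of_nonneg_left (by linarith) ha00
      have p3 : G n * sb n ≤ (1 + θ) * sb n :=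
        mul_le_mul_of_nonneg_right e4 (hsb0 n)
      have p4 : (1 + θ) * sb n ≤ (1 + θ) * (l - ε) :=
        mul_le_mul_of_nonneg_left hcon' (by linarith)
      have p5 : (1 - a 0 n) * (G n * sb n + H n)
          ≤ (1 - a 0 n) * ((1 + θ) * (l - ε) + θ) :=
        mul_le_mul_of_nonneg_left (by linarith) (by linarith)
      have key1 : l - θ < a 0 n * (l + θ) + (1 - a 0 n) * ((1 + θ) * (l - ε) + θ) := by
        calc l - θ < r (n+1) := er3
          _ ≤ a 0 n * r n + (1 - a 0 n) * (G n * sb n + H n) := eX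
          _ ≤ _ := by linarith
      have key2 : (1 - ahi) * ε ≤ (1 - a 0 n) * ε :=
        mul_le_mul_of_nonneg_right (by linarith) hε.le
      have key3 : (1 - a 0 n) * ε < θ * (l + 3) := by
        nlinarith [key1, mul_nonneg (mul_nonneg hql.le hθpos.le) (sub_nonneg.2 hεl),
          mul_nonneg ha00 hθpos.le, mul_nonneg hql.le hθpos.le,
          mul_nonneg (mul_nonneg ha00 hθpos.le) hl0,
          mul_nonneg (sub_nonneg.2 ha0b) hθpos.le]
      linarith
    · -- upper bound: sb n - l < ε
      have q1 : (1 + tA n) * r n ≤ (1 + θ) * (l + θ) :=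
        mul_le_mul (by linarith) (by linarith) (hr0 n) (by linarith)
      have q2 : sb n ≤ (1 + θ) * (l + θ) + θ := by linarith
      nlinarith [q2, key4, hθ1, hθpos.le, hl0, hε.le, sq_nonneg θ,
        mul_nonneg (show (0:ℝ) ≤ ahi by linarith) hε.le]
  -- the auxiliary sequence v
  set u : ℕ → X := fun n => x n - p with hudef
  set v : ℕ → X := fun n =>
    (1 - b 0 n)⁻¹ • ∑ i : Fin m, b i.succ n • ((I i)^[n] (x n) - p) with hvdef
  have hb0lt : ∀ n, b 0 n < 1 := fun n => lt_of_le_of_lt (hb 0 n).2 hbhi1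
  have hb0pos : ∀ n, 0 < 1 - b 0 n := fun n => by linarith [hb0lt n]
  have hvsmul : ∀ n, (1 - b 0 n) • v n
      = ∑ i : Fin m, b i.succ n • ((I i)^[n] (x n) - p) := by
    intro n
    rw [hvdef]
    rw [smul_smul, mul_inv_cancel₀ (hb0pos n).ne', one_smul]
  have hypuv : ∀ n, y n - p = b 0 n • u n + (1 - b 0 n) • v n := by
    intro n
    rw [hvsmul n, hudef, hyp n]
  have hVE : ∀ n, 1 ≤ n → ‖v n‖ ≤ (1 + tA n) * r n + tB n := by
    intro n hn
    show ‖(1 - b 0 n)⁻¹ • ∑ i : Fin m, b i.succ n • ((I i)^[n] (x n) - p)‖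
      ≤ (1 + tA n) * ‖x n - p‖ + tB n
    have h1 := aux_comb_norm (fun i => b i.succ n)
      (fun i => hblo.le.trans (hb i.succ n).1) (fun i => (I i)^[n] (x n) - p)
    have h2 : ∑ i : Fin m, b i.succ n * ‖(I i)^[n] (x n) - p‖
        ≤ ∑ i : Fin m, b i.succ n * ((1 + tA n) * ‖x n - p‖ + tB n) :=
      Finset.sum_le_sum fun i _ => mul_le_mul_of_nonneg_left
        (hIE i n hn (x n) (hxK n)) (hblo.le.trans (hb i.succ n).1)
    have h3 : ∑ i : Fin m, b i.succ n * ((1 + tA n) * ‖x n - p‖ + tB n)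
        = (1 - b 0 n) * ((1 + tA n) * ‖x n - p‖ + tB n) := by
      rw [← Finset.sum_mul]
      have hsum : ∑ i : Fin m, b i.succ n = 1 - b 0 n := by linarith [hbsum' n]
      rw [hsum]
    rw [norm_smul, Real.norm_eq_abs, abs_of_pos (inv_pos.2 (hb0pos n))]
    calc (1 - b 0 n)⁻¹ * ‖∑ i : Fin m, b i.succ n • ((I i)^[n] (x n) - p)‖
        ≤ (1 - b 0 n)⁻¹ * ((1 - b 0 n) * ((1 + tA n) * ‖x n - p‖ + tB n)) := by
          apply mul_le_mul_of_nonneg_left _ (inv_pos.2 (hb0pos n)).le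
          calc ‖∑ i : Fin m, b i.succ n • ((I i)^[n] (x n) - p)‖
              ≤ ∑ i : Fin m, b i.succ n * ‖(I i)^[n] (x n) - p‖ := h1
            _ ≤ _ := by linarith
      _ = (1 + tA n) * ‖x n - p‖ + tB n := inv_mul_cancel_left₀ (hb0pos n).ne' _
  -- apply Schu's lemma
  have hschu : Tendsto (fun n => ‖u n - v n‖) atTop (nhds 0) := by
    refine aux_schu (fun n => b 0 n) blo bhi hblo hbhi1 (fun n => hb 0 n) u v l hl0
      ?_ ?_ ?_
    · intro η hη
      obtain ⟨Nn, hNn⟩ := Metric.tendsto_atTop.1 hrl η hη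
      rw [eventually_atTop]
      refine ⟨Nn, fun n hn => ?_⟩
      have hd := hNn n hn
      rw [Real.dist_eq] at hd
      have h2 := abs_lt.1 hd
      simp only [hudef]
      have hrn : ‖x n - p‖ = r n := rfl
      rw [hrn]; linarith [h2.2]
    · intro η hη
      have h1 : ∀ᶠ n in atTop, (1 + tA n) * r n + tB n ≤ l + η := by
        obtain ⟨Nn, hNn⟩ := Metric.tendsto_atTop.1 hZlim η hη
        rw [eventually_atTop]
        refine ⟨Nn, fun n hn => ?_⟩
        have hd := hNn n hn
        rw [Real.dist_eq] at hd
        linarith [(abs_lt.1 hd).2]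
      have h2 : ∀ᶠ n in atTop, 1 ≤ n := eventually_ge_atTop 1
      filter_upwards [h1, h2] with n hn1 hn2
      exact (hVE n hn2).trans hn1
    · refine hsl.congr fun n => ?_
      rw [hsbdef]
      simp only
      rw [hypuv n]
  -- conclusion
  have hyx : ∀ n, y n - x n = (1 - b 0 n) • (v n - u n) := by
    intro n
    have h1 : y n - x n = (y n - p) - u n := by simp only [hudef]; abel
    rw [h1, hypuv n]
    module
  refine squeeze_zero (fun n => norm_nonneg _) (fun n => ?_) hschu
  rw [hyx n, norm_smul, Real.norm_eq_abs, abs_of_pos (hb0pos n), ← norm_neg, neg_sub]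
  exact mul_le_of_le_one_left (norm_nonneg _) (by linarith [hb0lt n, (hb 0 n).1, hblo])
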